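/- Let (X_t) be a stochastic process adapted to a filtration F_t, taking values in S ⊆ {0} ∪ [x_min, ∞) with x_min > 0 and 0 ∈ S, and let T = min{t : X_t = 0}. Let h : [x_min, ∞) → (0, ∞) be monotone increasing with E[X_t − X_{t+1} | F_t] ≥ h(X_t) for t < T. Then E[T | F_0] ≤ x_min/h(x_min) + ∫_{x_min}^{X_0} 1/h(x) dx. -/

import Mathlib

open MeasureTheory intervalIntegral Filter

section DriftAux

variable (h : ℝ → ℝ) (xmin : ℝ)

/-- Potential function for the variable drift theorem. -/
noncomputable def driftG (x : ℝ) : ℝ :=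
  if xmin ≤ x then xmin / h xmin + ∫ z in xmin..x, 1 / h z else 0

variable (hxmin : 0 < xmin)
  (hpos : ∀ x, xmin ≤ x → 0 < h x)
  (hmono : ∀ x y, xmin ≤ x → x ≤ y → h x ≤ h y)

include hpos hmono in
lemma drift_intInt {x y : ℝ} (hx : xmin ≤ x) (hy : xmin ≤ y) :
    IntervalIntegrable (fun z => 1 / h z) volume x y := by
  apply AntitoneOn.intervalIntegrable
  intro u hu v hv huv
  rw [Set.mem_uIcc] at hu
  have hu' : xmin ≤ u := by rcases hu with ⟨h1, _⟩ | ⟨h1, _⟩ <;> linarith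
  exact one_div_le_one_div_of_le (hpos u hu') (hmono u v hu' huv)

include hpos hmono in
lemma drift_integral_ge {x y : ℝ} (hy : xmin ≤ y) (hx : xmin ≤ x) :
    (x - y) / h x ≤ ∫ z in y..x, 1 / h z := by
  rcases le_total y x with hyx | hxy
  · have : ∫ z in y..x, (1 / h x) ≤ ∫ z in y..x, 1 / h z := by
      apply integral_mono_on hyx (intervalIntegrable_const) (drift_intInt h xmin hpos hmono hy hx)
      intro z hz
      exact one_div_le_one_div_of_le (hpos z (le_trans hy hz.1)) (hmono z x (le_trans hy hz.1) hz.2)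
    simpa [smul_eq_mul, div_eq_mul_inv, mul_comm] using this
  · have : ∫ z in x..y, 1 / h z ≤ ∫ z in x..y, (1 / h x) := by
      apply integral_mono_on hxy (drift_intInt h xmin hpos hmono hx hy) (intervalIntegrable_const)
      intro z hz
      exact one_div_le_one_div_of_le (hpos x hx) (hmono x z hx hz.1)
    rw [intervalIntegral.integral_symm x y]
    simp only [intervalIntegral.integral_const, smul_eq_mul] at this
    have h3 : (x - y) / h x = -((y - x) * (1 / h x)) := by ring
    linarith

include hpos hmono in
lemma drift_integral_le {x y : ℝ} (hy : xmin ≤ y) (hx : y ≤ x) :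
    ∫ z in y..x, 1 / h z ≤ (x - y) / h y := by
  have : ∫ z in y..x, 1 / h z ≤ ∫ z in y..x, (1 / h y) := by
    apply integral_mono_on hx (drift_intInt h xmin hpos hmono hy (hy.trans hx))
      intervalIntegrable_const
    intro z hz
    exact one_div_le_one_div_of_le (hpos y hy) (hmono y z hy hz.1)
  simpa [smul_eq_mul, div_eq_mul_inv, mul_comm] using this

include hpos hmono in
lemma drift_integral_nonneg {x : ℝ} (hx : xmin ≤ x) :
    0 ≤ ∫ z in xmin..x, 1 / h z := by
  have := drift_integral_ge h xmin hpos hmono le_rfl hx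
  have h2 : 0 ≤ (x - xmin) / h x := div_nonneg (by linarith) (hpos x hx).le
  linarith

include hxmin hpos hmono in
lemma driftG_nonneg (x : ℝ) : 0 ≤ driftG h xmin x := by
  unfold driftG
  split_ifs with hx
  · have h1 : 0 ≤ xmin / h xmin := div_nonneg hxmin.le (hpos xmin le_rfl).le
    have h2 := drift_integral_nonneg h xmin hpos hmono hx
    linarith
  · exact le_refl 0

include hxmin hpos hmono in
lemma driftG_mono : Monotone (driftG h xmin) := by
  intro a b hab
  unfold driftG
  split_ifs with ha hb hb
  · have hsub : (∫ z in xmin..b, 1 / h z) - ∫ z in xmin..a, 1 / h z = ∫ z in a..b, 1 / h z :=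
      integral_interval_sub_left (drift_intInt h xmin hpos hmono le_rfl (ha.trans hab))
        (drift_intInt h xmin hpos hmono le_rfl ha)
    have : 0 ≤ ∫ z in a..b, 1 / h z := by
      apply intervalIntegral.integral_nonneg hab
      intro z hz
      exact (one_div_pos.mpr (hpos z (ha.trans hz.1))).le
    linarith
  · exact absurd (ha.trans hab) hb
  · have h1 : 0 ≤ xmin / h xmin := div_nonneg (le_of_lt hxmin) (hpos xmin le_rfl).le
    have h2 := drift_integral_nonneg h xmin hpos hmono hb
    linarith
  · exact le_refl 0

include hxmin hpos hmono in
lemma driftG_key {x y : ℝ} (hx : xmin ≤ x) (hy : y = 0 ∨ xmin ≤ y) :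
    (x - y) / h x ≤ driftG h xmin x - driftG h xmin y := by
  rcases hy with rfl | hy
  · rw [driftG, driftG, if_pos hx, if_neg (not_le.mpr hxmin)]
    have h1 : xmin / h x ≤ xmin / h xmin :=
      div_le_div_of_nonneg_left hxmin.le (hpos xmin le_rfl) (hmono xmin x le_rfl hx)
    have h2 := drift_integral_ge h xmin hpos hmono le_rfl hx
    have h3 : (x - 0) / h x = xmin / h x + (x - xmin) / h x := by ring
    linarith
  · rw [driftG, driftG, if_pos hx, if_pos hy]
    have hsub : (xmin / h xmin + ∫ z in xmin..x, 1 / h z)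
        - (xmin / h xmin + ∫ z in xmin..y, 1 / h z) = ∫ z in y..x, 1 / h z := by
      rw [add_sub_add_left_eq_sub]
      exact integral_interval_sub_left (drift_intInt h xmin hpos hmono le_rfl hx)
        (drift_intInt h xmin hpos hmono le_rfl hy)
    rw [hsub]
    exact drift_integral_ge h xmin hpos hmono hy hx

include hxmin hpos hmono in
lemma driftG_le {x : ℝ} (hx : x = 0 ∨ xmin ≤ x) : driftG h xmin x ≤ x / h xmin := by
  rcases hx with rfl | hx
  · rw [driftG, if_neg (not_le.mpr hxmin)]; simp
  · rw [driftG, if_pos hx]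
    have h2 := drift_integral_le h xmin hpos hmono le_rfl hx
    have h3 : xmin / h xmin + (x - xmin) / h xmin = x / h xmin := by ring
    linarith

end DriftAux

/-- First hitting time of state `0`, valued in `ℕ∞` (`⊤` if never hit). -/
noncomputable def hittingTimeZero {Ω : Type*} (X : ℕ → Ω → ℝ) (ω : Ω) : ℕ∞ :=
  ⨅ (t : ℕ) (_ : X t ω = 0), (t : ℕ∞)

lemma hittingTimeZero_lt_iff {Ω : Type*} (X : ℕ → Ω → ℝ) (ω : Ω) (t : ℕ) :
    (t : ℕ∞) < hittingTimeZero X ω ↔ ∀ k ≤ t, X k ω ≠ 0 := by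
  constructor
  · intro hlt k hk hk0
    have h1 : hittingTimeZero X ω ≤ (k : ℕ∞) := iInf₂_le k hk0
    have h2 : (k : ℕ∞) ≤ (t : ℕ∞) := by exact_mod_cast hk
    exact absurd (lt_of_lt_of_le hlt (h1.trans h2)) (lt_irrefl _)
  · intro hall
    have h1 : ((t + 1 : ℕ) : ℕ∞) ≤ hittingTimeZero X ω := by
      refine le_iInf₂ fun k hk0 => ?_
      have hk : ¬ k ≤ t := fun hkle => hall k hkle hk0
      exact_mod_cast Nat.succ_le_of_lt (Nat.lt_of_not_le hk)
    refine lt_of_lt_of_le ?_ h1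
    exact_mod_cast Nat.lt_succ_self t

lemma enat_coe_eq_tsum (m : ℕ∞) :
    (m : ENNReal) = ∑' t : ℕ, if (t : ℕ∞) < m then (1 : ENNReal) else 0 := by
  induction m using ENat.recTopCoe with
  | top =>
    have hlt : ∀ t : ℕ, ((t : ℕ∞) < (⊤ : ℕ∞)) := fun t => lt_of_le_of_ne le_top (ENat.coe_ne_top t)
    simp only [hlt, if_true, ENat.toENNReal_top]
    exact (ENNReal.tsum_const_eq_top_of_ne_zero one_ne_zero).symm
  | coe n =>
    have hiff : ∀ t : ℕ, ((t : ℕ∞) < (n : ℕ∞)) ↔ t < n := fun t => Nat.cast_lt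
    have heq : (fun t : ℕ => if (t : ℕ∞) < (n : ℕ∞) then (1 : ENNReal) else 0)
        = fun t : ℕ => if t < n then (1 : ENNReal) else 0 := by
      funext t; simp [hiff t]
    rw [heq, tsum_eq_sum (s := Finset.range n) (fun b hb => by
      simp [Finset.mem_range] at hb; simp [hb])]
    rw [Finset.sum_ite_of_true (fun b hb => Finset.mem_range.mp hb)]
    simp

/-- Variable drift theorem, upper bound: the process lives on `{0} ∪ [xmin, ∞)`,
`h` is positive and monotone increasing on `[xmin, ∞)`, and the drift towards `0`
is at least `h (X t)` on the event `t < T`. Then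
`E[T | ℱ 0] ≤ xmin / h xmin + ∫_{xmin}^{X 0} 1 / h x dx`
(stated via set integrals over `ℱ 0`-measurable sets). -/
theorem variable_drift_upper
    {Ω : Type*} {m0 : MeasurableSpace Ω} {μ : Measure Ω} [IsProbabilityMeasure μ]
    (ℱ : Filtration ℕ m0) (X : ℕ → Ω → ℝ)
    (hadapted : Adapted ℱ X)
    (xmin : ℝ) (hxmin : 0 < xmin)
    (hstate : ∀ t ω, X t ω = 0 ∨ xmin ≤ X t ω)
    (hint : ∀ t, Integrable (X t) μ)
    (h : ℝ → ℝ)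
    (hpos : ∀ x, xmin ≤ x → 0 < h x)
    (hmono : ∀ x y, xmin ≤ x → x ≤ y → h x ≤ h y)
    (hdrift : ∀ t : ℕ, ∀ᵐ ω ∂μ,
      (t : ℕ∞) < hittingTimeZero X ω →
        h (X t ω) ≤ (μ[fun ω => X t ω - X (t + 1) ω | ℱ t]) ω) :
    ∀ s : Set Ω, MeasurableSet[ℱ 0] s →
      ∫⁻ ω in s, (hittingTimeZero X ω : ENNReal) ∂μ
        ≤ ∫⁻ ω in s,
            ENNReal.ofReal (xmin / h xmin + ∫ x in xmin..(X 0 ω), 1 / h x) ∂μ := by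
  classical
  intro s hs
  set A : ℕ → Set Ω := fun t => {ω | ∀ k ≤ t, X k ω ≠ 0} with hAdef
  have hA_iff : ∀ (t : ℕ) (ω : Ω), ω ∈ A t ↔ (t : ℕ∞) < hittingTimeZero X ω :=
    fun t ω => (hittingTimeZero_lt_iff X ω t).symm
  have hAmeasF : ∀ t, MeasurableSet[ℱ t] (A t) := by
    intro t
    have hset : A t = ⋂ k ∈ Set.Iic t, (X k) ⁻¹' ({0}ᶜ) := by
      ext ω
      simp [hAdef, Set.mem_iInter, Set.mem_preimage]
    rw [hset]
    refine MeasurableSet.biInter (Set.to_countable _) fun k hk => ?_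
    exact (Measurable.mono (hadapted k) (ℱ.mono hk) le_rfl) (measurableSet_singleton 0).compl
  have hAmeas0 : ∀ t, MeasurableSet (A t) := fun t => ℱ.le t _ (hAmeasF t)
  have hs0 : MeasurableSet s := ℱ.le 0 _ hs
  set h' : ℝ → ℝ := fun x => h (max xmin x) with hh'def
  have hh'mono : Monotone h' := fun a b hab =>
    hmono _ _ (le_max_left _ _) (max_le_max le_rfl hab)
  have hh'meas : Measurable h' := hh'mono.measurable
  have hgmono : Monotone (driftG h xmin) := driftG_mono h xmin hxmin hpos hmono
  have hgmeas : Measurable (driftG h xmin) := hgmono.measurable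
  have hgnn : ∀ x, 0 ≤ driftG h xmin x := driftG_nonneg h xmin hxmin hpos hmono
  -- integrability of the potential process
  have hXmeas : ∀ t, Measurable (X t) := fun t => Measurable.mono (hadapted t) (ℱ.le t) le_rfl
  have hgX_int : ∀ t, Integrable (fun ω => driftG h xmin (X t ω)) μ := by
    intro t
    refine Integrable.mono ((hint t).div_const (h xmin))
      ((hgmeas.comp (hXmeas t)).aestronglyMeasurable) (Eventually.of_forall fun ω => ?_)
    rw [Real.norm_eq_abs, Real.norm_eq_abs, abs_of_nonneg (hgnn _)]
    refine le_trans (driftG_le h xmin hxmin hpos hmono (hstate t ω)) ?_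
    exact le_abs_self _
  -- the key one-step inequality
  have key : ∀ t : ℕ, (μ (s ∩ A t)).toReal
      ≤ (∫ ω in s ∩ A t, driftG h xmin (X t ω) ∂μ)
        - ∫ ω in s ∩ A t, driftG h xmin (X (t + 1) ω) ∂μ := by
    intro t
    set B := s ∩ A t with hBdef
    have hBF : MeasurableSet[ℱ t] B := ((ℱ.mono (Nat.zero_le t)) _ hs).inter (hAmeasF t)
    have hB : MeasurableSet B := ℱ.le t _ hBF
    set f : Ω → ℝ := B.indicator (fun ω => (h' (X t ω))⁻¹) with hfdef
    have hfSM : StronglyMeasurable[ℱ t] f :=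
      (((hh'meas.comp (hadapted t)).inv).stronglyMeasurable).indicator hBF
    have hfbd : ∀ ω, ‖f ω‖ ≤ (h xmin)⁻¹ := by
      intro ω
      rw [hfdef]
      by_cases hω : ω ∈ B
      · rw [Set.indicator_of_mem hω]
        have h1 : h xmin ≤ h' (X t ω) := hmono _ _ le_rfl (le_max_left _ _)
        have h2 : 0 < h' (X t ω) := hpos _ (le_max_left _ _)
        rw [Real.norm_eq_abs, abs_of_pos (inv_pos.mpr h2)]
        exact inv_anti₀ (hpos xmin le_rfl) h1
      · rw [Set.indicator_of_notMem hω]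
        simp [inv_nonneg.mpr (hpos xmin le_rfl).le]
    set d : Ω → ℝ := fun ω => X t ω - X (t + 1) ω with hddef
    have hdint : Integrable d μ := (hint t).sub (hint (t + 1))
    have hfaesm : AEStronglyMeasurable f μ := (hfSM.mono (ℱ.le t)).aestronglyMeasurable
    have hfd_int : Integrable (f * d) μ := hdint.bdd_mul hfaesm (Eventually.of_forall hfbd)
    have hpull : μ[f * d | ℱ t] =ᵐ[μ] f * μ[d | ℱ t] :=
      condExp_stronglyMeasurable_mul_of_bound (ℱ.le t) hfSM hdint _ (Eventually.of_forall hfbd)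
    have hfc_int : Integrable (f * μ[d | ℱ t]) μ :=
      integrable_condExp.bdd_mul hfaesm (Eventually.of_forall hfbd)
    have hlow : (B.indicator (fun _ => (1 : ℝ))) ≤ᵐ[μ] f * μ[d | ℱ t] := by
      filter_upwards [hdrift t] with ω hω
      by_cases hmem : ω ∈ B
      · have hAt : ω ∈ A t := hmem.2
        have hlt : (t : ℕ∞) < hittingTimeZero X ω := (hA_iff t ω).mp hAt
        have hX0 : X t ω ≠ 0 := hAt t le_rfl
        have hXge : xmin ≤ X t ω := (hstate t ω).resolve_left hX0
        have hmax : h' (X t ω) = h (X t ω) := by rw [hh'def]; simp [max_eq_right hXge]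
        have hcond := hω hlt
        have hpos' : 0 < h (X t ω) := hpos _ hXge
        rw [Set.indicator_of_mem hmem]
        calc (1 : ℝ) = (h (X t ω))⁻¹ * h (X t ω) := (inv_mul_cancel₀ hpos'.ne').symm
          _ ≤ (h (X t ω))⁻¹ * (μ[d | ℱ t]) ω :=
              mul_le_mul_of_nonneg_left hcond (inv_nonneg.mpr hpos'.le)
          _ = (f * μ[d | ℱ t]) ω := by
              rw [Pi.mul_apply, hfdef, Set.indicator_of_mem hmem, hmax]
      · rw [Set.indicator_of_notMem hmem]
        rw [Pi.mul_apply, hfdef, Set.indicator_of_notMem hmem, zero_mul]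
    have h1 : (μ B).toReal ≤ ∫ ω, (f * μ[d | ℱ t]) ω ∂μ := by
      have hmono_int := integral_mono_ae ((integrable_const (1 : ℝ)).indicator hB) hfc_int hlow
      rwa [integral_indicator_const (1 : ℝ) hB, smul_eq_mul, mul_one] at hmono_int
    have h2 : ∫ ω, (f * μ[d | ℱ t]) ω ∂μ = ∫ ω, (f * d) ω ∂μ := by
      calc ∫ ω, (f * μ[d | ℱ t]) ω ∂μ
          = ∫ ω, (μ[f * d | ℱ t]) ω ∂μ := (integral_congr_ae hpull).symm
        _ = ∫ ω, (f * d) ω ∂μ := integral_condExp (ℱ.le t)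
    have hfd_eq : f * d = B.indicator (fun ω => (h' (X t ω))⁻¹ * d ω) := by
      funext ω
      by_cases hmem : ω ∈ B <;>
        simp [hfdef, Set.indicator_of_mem, Set.indicator_of_notMem, hmem]
    have h3 : ∫ ω, (f * d) ω ∂μ = ∫ ω in B, (h' (X t ω))⁻¹ * d ω ∂μ := by
      rw [hfd_eq, MeasureTheory.integral_indicator hB]
    have hLint : IntegrableOn (fun ω => (h' (X t ω))⁻¹ * d ω) B μ := by
      exact (integrable_indicator_iff hB).mp (hfd_eq ▸ hfd_int)
    have h4 : ∫ ω in B, (h' (X t ω))⁻¹ * d ω ∂μ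
        ≤ ∫ ω in B, (driftG h xmin (X t ω) - driftG h xmin (X (t + 1) ω)) ∂μ := by
      refine setIntegral_mono_on hLint
        (((hgX_int t).sub (hgX_int (t + 1))).integrableOn) hB ?_
      intro ω hmem
      have hAt : ω ∈ A t := hmem.2
      have hX0 : X t ω ≠ 0 := hAt t le_rfl
      have hXge : xmin ≤ X t ω := (hstate t ω).resolve_left hX0
      have hmax : h' (X t ω) = h (X t ω) := by rw [hh'def]; simp [max_eq_right hXge]
      have hkey := driftG_key h xmin hxmin hpos hmono hXge (hstate (t + 1) ω)
      rw [hmax, hddef]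
      calc (h (X t ω))⁻¹ * (X t ω - X (t + 1) ω)
          = (X t ω - X (t + 1) ω) / h (X t ω) := by rw [mul_comm, div_eq_mul_inv]
        _ ≤ _ := hkey
    have h5 : ∫ ω in B, (driftG h xmin (X t ω) - driftG h xmin (X (t + 1) ω)) ∂μ
        = (∫ ω in B, driftG h xmin (X t ω) ∂μ) - ∫ ω in B, driftG h xmin (X (t + 1) ω) ∂μ :=
      integral_sub (hgX_int t).integrableOn (hgX_int (t + 1)).integrableOn
    calc (μ B).toReal ≤ ∫ ω, (f * μ[d | ℱ t]) ω ∂μ := h1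
      _ = ∫ ω, (f * d) ω ∂μ := h2
      _ = ∫ ω in B, (h' (X t ω))⁻¹ * d ω ∂μ := h3
      _ ≤ ∫ ω in B, (driftG h xmin (X t ω) - driftG h xmin (X (t + 1) ω)) ∂μ := h4
      _ = _ := h5
  -- telescoping
  have htel : ∀ n : ℕ, (∑ t ∈ Finset.range n, (μ (s ∩ A t)).toReal)
      + ∫ ω in s ∩ A n, driftG h xmin (X n ω) ∂μ
      ≤ ∫ ω in s ∩ A 0, driftG h xmin (X 0 ω) ∂μ := by
    intro n
    induction n with
    | zero => simp
    | succ n ih =>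
      rw [Finset.sum_range_succ]
      have hsub : A (n + 1) ⊆ A n := fun ω hω k hk => hω k (hk.trans (Nat.le_succ n))
      have hmono_int : ∫ ω in s ∩ A (n + 1), driftG h xmin (X (n + 1) ω) ∂μ
          ≤ ∫ ω in s ∩ A n, driftG h xmin (X (n + 1) ω) ∂μ :=
        setIntegral_mono_set (hgX_int (n + 1)).integrableOn
          (Eventually.of_forall fun ω => hgnn _)
          ((Set.inter_subset_inter_right s hsub).eventuallyLE)
      have hk := key n
      linarith
  have hsum : ∀ n : ℕ, ∑ t ∈ Finset.range n, (μ (s ∩ A t)).toReal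
      ≤ ∫ ω in s, driftG h xmin (X 0 ω) ∂μ := by
    intro n
    have h0 : ∫ ω in s ∩ A 0, driftG h xmin (X 0 ω) ∂μ
        ≤ ∫ ω in s, driftG h xmin (X 0 ω) ∂μ :=
      setIntegral_mono_set (hgX_int 0).integrableOn
        (Eventually.of_forall fun ω => hgnn _) ((Set.inter_subset_left).eventuallyLE)
    have hnn : 0 ≤ ∫ ω in s ∩ A n, driftG h xmin (X n ω) ∂μ :=
      setIntegral_nonneg ((hs0).inter (hAmeas0 n)) fun ω _ => hgnn _
    linarith [htel n]
  -- rewrite the left-hand side as a sum of measures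
  have hTeq : ∀ ω : Ω, (hittingTimeZero X ω : ENNReal)
      = ∑' t : ℕ, (A t).indicator (fun _ => (1 : ENNReal)) ω := by
    intro ω
    rw [enat_coe_eq_tsum]
    refine tsum_congr fun t => ?_
    rw [Set.indicator_apply]
    exact if_congr ((hA_iff t ω).symm) rfl rfl
  have hL : ∫⁻ ω in s, (hittingTimeZero X ω : ENNReal) ∂μ = ∑' t : ℕ, μ (A t ∩ s) := by
    calc ∫⁻ ω in s, (hittingTimeZero X ω : ENNReal) ∂μ
        = ∫⁻ ω in s, ∑' t : ℕ, (A t).indicator (fun _ => (1 : ENNReal)) ω ∂μ :=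
          lintegral_congr fun ω => hTeq ω
      _ = ∑' t : ℕ, ∫⁻ ω in s, (A t).indicator (fun _ => (1 : ENNReal)) ω ∂μ :=
          lintegral_tsum fun t => (measurable_const.indicator (hAmeas0 t)).aemeasurable
      _ = ∑' t : ℕ, μ (A t ∩ s) := by
          refine tsum_congr fun t => ?_
          rw [lintegral_indicator (hAmeas0 t), setLIntegral_one, Measure.restrict_apply (hAmeas0 t)]
  have hub : ∑' t : ℕ, μ (A t ∩ s) ≤ ENNReal.ofReal (∫ ω in s, driftG h xmin (X 0 ω) ∂μ) := by
    rw [ENNReal.tsum_eq_iSup_nat]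
    refine iSup_le fun n => ?_
    have hofr : ∑ t ∈ Finset.range n, μ (A t ∩ s)
        = ENNReal.ofReal (∑ t ∈ Finset.range n, (μ (s ∩ A t)).toReal) := by
      rw [ENNReal.ofReal_sum_of_nonneg (fun _ _ => ENNReal.toReal_nonneg)]
      refine Finset.sum_congr rfl fun t _ => ?_
      rw [Set.inter_comm, ENNReal.ofReal_toReal (measure_ne_top μ _)]
    rw [hofr]
    exact ENNReal.ofReal_le_ofReal (hsum n)
  have hfin : ENNReal.ofReal (∫ ω in s, driftG h xmin (X 0 ω) ∂μ)
      = ∫⁻ ω in s, ENNReal.ofReal (driftG h xmin (X 0 ω)) ∂μ :=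
    ofReal_integral_eq_lintegral_ofReal (hgX_int 0).integrableOn
      (Eventually.of_forall fun ω => hgnn _)
  have hlast : ∫⁻ ω in s, ENNReal.ofReal (driftG h xmin (X 0 ω)) ∂μ
      ≤ ∫⁻ ω in s, ENNReal.ofReal (xmin / h xmin + ∫ x in xmin..(X 0 ω), 1 / h x) ∂μ := by
    refine lintegral_mono fun ω => ?_
    rcases hstate 0 ω with h0 | h0
    · rw [h0, driftG, if_neg (not_le.mpr hxmin)]
      simp
    · exact ENNReal.ofReal_le_ofReal (le_of_eq (by rw [driftG, if_pos h0]))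
  rw [hL]
  exact le_trans hub (le_trans (le_of_eq hfin) hlast)
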